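/- Let Ψ₁, Ψ₂ be entropy functions. Then for every α ≥ 1 and every finite positive Borel measure π^α attaining C_ub^α(μ,ν), the total mass of π^α satisfies Ψ₁(π^α(X×Y)) ≤ C(μ,ν); consequently, since Ψ₁ is superlinear, sup_{α ≥ 1} π^α(X×Y) < ∞, i.e., the family of minimizers with α ≥ 1 has uniformly bounded total mass. -/

import Mathlib

open MeasureTheory Filter
open scoped ENNReal NNReal Topology Classical

noncomputable section

/-- The quadratic transport cost `c(x,y) = τ‖x-y‖₂²`. -/
def cost {d : ℕ} (τ : ℝ) (x y : EuclideanSpace ℝ (Fin d)) : ℝ := τ * ‖x - y‖ ^ 2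

/-- An entropy function `Ψ : ℝ → [0,∞]`: convex, lower semicontinuous, non-negative
(automatic from the codomain), `Ψ(x) = ∞` for `x < 0`, `Ψ(1) = 0`, and superlinear. -/
structure IsEntropy (Ψ : ℝ → ℝ≥0∞) : Prop where
  convex : ∀ x y : ℝ, ∀ t : ℝ, 0 ≤ t → t ≤ 1 →
    Ψ (t * x + (1 - t) * y) ≤ ENNReal.ofReal t * Ψ x + ENNReal.ofReal (1 - t) * Ψ y
  lsc : LowerSemicontinuous Ψ
  eq_top_of_neg : ∀ x : ℝ, x < 0 → Ψ x = ∞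
  one_eq_zero : Ψ 1 = 0
  superlinear : Tendsto (fun t : ℝ => Ψ t / ENNReal.ofReal t) atTop (𝓝 ∞)

/-- The Csiszár divergence `D_Ψ(ρ|σ) = ∫ Ψ(dρ/dσ) dσ` if `ρ ≪ σ`, and `∞` otherwise. -/
def csiszar {Z : Type*} [MeasurableSpace Z] (Ψ : ℝ → ℝ≥0∞) (ρ σ : Measure Z) : ℝ≥0∞ :=
  if ρ ≪ σ then ∫⁻ z, Ψ ((ρ.rnDeriv σ z).toReal) ∂σ else ∞

/-- The objective of the `α`-scaled unbalanced optimal transport problem: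
`∫ c dπ + α D_{Ψ₁}(π₀|μ) + α D_{Ψ₂}(π₁|ν)`. -/
def uotObj {d : ℕ} (τ α : ℝ) (Ψ₁ Ψ₂ : ℝ → ℝ≥0∞)
    (μ ν : Measure (EuclideanSpace ℝ (Fin d)))
    (π : Measure (EuclideanSpace ℝ (Fin d) × EuclideanSpace ℝ (Fin d))) : ℝ≥0∞ :=
  (∫⁻ z, ENNReal.ofReal (cost τ z.1 z.2) ∂π)
    + ENNReal.ofReal α * csiszar Ψ₁ (π.map Prod.fst) μ
    + ENNReal.ofReal α * csiszar Ψ₂ (π.map Prod.snd) ν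

/-- The `α`-scaled unbalanced optimal transport cost `C_ub^α(μ,ν)`, the infimum of the
objective over finite positive Borel measures `π` supported on `X × Y`. -/
def UOTcost {d : ℕ} (τ α : ℝ) (Ψ₁ Ψ₂ : ℝ → ℝ≥0∞) (X Y : Set (EuclideanSpace ℝ (Fin d)))
    (μ ν : Measure (EuclideanSpace ℝ (Fin d))) : ℝ≥0∞ :=
  ⨅ (π : Measure (EuclideanSpace ℝ (Fin d) × EuclideanSpace ℝ (Fin d)))
    (_ : IsFiniteMeasure π) (_ : π ((X ×ˢ Y)ᶜ) = 0), uotObj τ α Ψ₁ Ψ₂ μ ν π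

/-- The optimal transport cost `C(μ,ν) = inf_{π ∈ Π(μ,ν)} ∫ c dπ`. -/
def OTcost {d : ℕ} (τ : ℝ) (μ ν : Measure (EuclideanSpace ℝ (Fin d))) : ℝ≥0∞ :=
  ⨅ (π : Measure (EuclideanSpace ℝ (Fin d) × EuclideanSpace ℝ (Fin d)))
    (_ : π.map Prod.fst = μ ∧ π.map Prod.snd = ν),
    ∫⁻ z, ENNReal.ofReal (cost τ z.1 z.2) ∂π


variable {Ψ : ℝ → ℝ≥0∞}

lemma slope_ineqs {u v w a b c : ℝ} (huv : u < v) (hvw : v < w)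
    (h : b * (w - u) ≤ (w - v) * a + (v - u) * c) :
    (b - a) / (v - u) ≤ (c - b) / (w - v) ∧ (b - a) / (v - u) ≤ (c - a) / (w - u) ∧
      (c - a) / (w - u) ≤ (c - b) / (w - v) := by
  have h1 : 0 < v - u := by linarith
  have h2 : 0 < w - v := by linarith
  have h3 : 0 < w - u := by linarith
  refine ⟨?_, ?_, ?_⟩
  · rw [div_le_div_iff₀ h1 h2]; nlinarith
  · rw [div_le_div_iff₀ h1 h3]; nlinarith
  · rw [div_le_div_iff₀ h3 h2]; nlinarith

lemma IsEntropy.three_point (hΨ : IsEntropy Ψ) {u v w : ℝ} (huv : u < v) (hvw : v < w)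
    (hu : Ψ u ≠ ∞) (hw : Ψ w ≠ ∞) :
    Ψ v ≠ ∞ ∧ (Ψ v).toReal * (w - u) ≤ (w - v) * (Ψ u).toReal + (v - u) * (Ψ w).toReal := by
  have h3 : 0 < w - u := by linarith
  set θ : ℝ := (w - v) / (w - u) with hθ
  have hθ0 : 0 ≤ θ := div_nonneg (by linarith) (by linarith)
  have hθ1 : θ ≤ 1 := by rw [hθ, div_le_one h3]; linarith
  have hcancel : θ * (w - u) = w - v := div_mul_cancel₀ _ h3.ne'
  have harg : θ * u + (1 - θ) * w = v := by linear_combination -hcancel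
  have hc := hΨ.convex u w θ hθ0 hθ1
  rw [harg] at hc
  have hne : ENNReal.ofReal θ * Ψ u + ENNReal.ofReal (1 - θ) * Ψ w ≠ ∞ :=
    ENNReal.add_ne_top.2 ⟨ENNReal.mul_ne_top ENNReal.ofReal_ne_top hu,
      ENNReal.mul_ne_top ENNReal.ofReal_ne_top hw⟩
  have hvne : Ψ v ≠ ∞ := ne_top_of_le_ne_top hne hc
  refine ⟨hvne, ?_⟩
  have htr : (Ψ v).toReal ≤ θ * (Ψ u).toReal + (1 - θ) * (Ψ w).toReal := by
    have := ENNReal.toReal_mono hne hc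
    rwa [ENNReal.toReal_add (ENNReal.mul_ne_top ENNReal.ofReal_ne_top hu)
      (ENNReal.mul_ne_top ENNReal.ofReal_ne_top hw), ENNReal.toReal_mul, ENNReal.toReal_mul,
      ENNReal.toReal_ofReal hθ0, ENNReal.toReal_ofReal (by linarith)] at this
  have expand : (θ * (Ψ u).toReal + (1 - θ) * (Ψ w).toReal) * (w - u)
      = (w - v) * (Ψ u).toReal + (v - u) * (Ψ w).toReal := by
    linear_combination ((Ψ u).toReal - (Ψ w).toReal) * hcancel
  calc (Ψ v).toReal * (w - u)
      ≤ (θ * (Ψ u).toReal + (1 - θ) * (Ψ w).toReal) * (w - u) :=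
        mul_le_mul_of_nonneg_right htr h3.le
    _ = (w - v) * (Ψ u).toReal + (v - u) * (Ψ w).toReal := expand

lemma IsEntropy.mono_right (hΨ : IsEntropy Ψ) {s t : ℝ} (h1 : 1 ≤ s) (hst : s ≤ t) :
    Ψ s ≤ Ψ t := by
  rcases eq_or_lt_of_le hst with rfl | hst
  · exact le_rfl
  rcases eq_or_lt_of_le h1 with rfl | h1
  · rw [hΨ.one_eq_zero]; exact zero_le
  set θ : ℝ := (s - 1) / (t - 1) with hθ
  have ht1 : (0:ℝ) < t - 1 := by linarith
  have hθ0 : 0 ≤ θ := div_nonneg (by linarith) ht1.le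
  have hθ1 : θ ≤ 1 := by rw [hθ, div_le_one ht1]; linarith
  have hcancel : θ * (t - 1) = s - 1 := div_mul_cancel₀ _ ht1.ne'
  have harg : θ * t + (1 - θ) * 1 = s := by linear_combination hcancel
  have hc := hΨ.convex t 1 θ hθ0 hθ1
  rw [harg, hΨ.one_eq_zero, mul_zero, add_zero] at hc
  calc Ψ s ≤ ENNReal.ofReal θ * Ψ t := hc
    _ ≤ 1 * Ψ t := mul_le_mul_left (ENNReal.ofReal_le_one.2 hθ1) _
    _ = Ψ t := one_mul _

lemma IsEntropy.mono_left (hΨ : IsEntropy Ψ) {s t : ℝ} (hts : t ≤ s) (h1 : s ≤ 1) :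
    Ψ s ≤ Ψ t := by
  rcases eq_or_lt_of_le hts with rfl | hts
  · exact le_rfl
  rcases eq_or_lt_of_le h1 with rfl | h1
  · rw [hΨ.one_eq_zero]; exact zero_le
  set θ : ℝ := (1 - s) / (1 - t) with hθ
  have ht1 : (0:ℝ) < 1 - t := by linarith
  have hθ0 : 0 ≤ θ := div_nonneg (by linarith) ht1.le
  have hθ1 : θ ≤ 1 := by rw [hθ, div_le_one ht1]; linarith
  have hcancel : θ * (1 - t) = 1 - s := div_mul_cancel₀ _ ht1.ne'
  have harg : θ * t + (1 - θ) * 1 = s := by linear_combination -hcancel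
  have hc := hΨ.convex t 1 θ hθ0 hθ1
  rw [harg, hΨ.one_eq_zero, mul_zero, add_zero] at hc
  calc Ψ s ≤ ENNReal.ofReal θ * Ψ t := hc
    _ ≤ 1 * Ψ t := mul_le_mul_left (ENNReal.ofReal_le_one.2 hθ1) _
    _ = Ψ t := one_mul _

lemma IsEntropy.support_line (hΨ : IsEntropy Ψ) {p t₀ q : ℝ} (hp : p < t₀) (hq : t₀ < q)
    (hΨp : Ψ p ≠ ∞) (hΨt : Ψ t₀ ≠ ∞) (hΨq : Ψ q ≠ ∞) :
    ∃ s : ℝ, ((Ψ t₀).toReal - (Ψ p).toReal) / (t₀ - p) ≤ s ∧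
      s ≤ ((Ψ q).toReal - (Ψ t₀).toReal) / (q - t₀) ∧
      ∀ u : ℝ, ENNReal.ofReal ((Ψ t₀).toReal + s * (u - t₀)) ≤ Ψ u := by
  set sl : ℝ → ℝ := fun t => ((Ψ t).toReal - (Ψ t₀).toReal) / (t - t₀) with hsl
  set S : Set ℝ := sl '' Set.Ioc t₀ q with hS
  have hfin : ∀ t ∈ Set.Ioc t₀ q, Ψ t ≠ ∞ := by
    rintro t ⟨ht1, ht2⟩
    rcases eq_or_lt_of_le ht2 with rfl | ht2
    · exact hΨq
    · exact (hΨ.three_point ht1 ht2 hΨt hΨq).1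
  have hqS : sl q ∈ S := ⟨q, ⟨hq, le_rfl⟩, rfl⟩
  have hSne : S.Nonempty := ⟨sl q, hqS⟩
  have hlb : ∀ x ∈ S, ((Ψ t₀).toReal - (Ψ p).toReal) / (t₀ - p) ≤ x := by
    rintro x ⟨t, ht, rfl⟩
    have h3 := hΨ.three_point hp ht.1 hΨp (hfin t ht)
    exact (slope_ineqs hp ht.1 h3.2).1
  have hbdd : BddBelow S := ⟨_, hlb⟩
  set s : ℝ := sInf S with hsdef
  refine ⟨s, le_csInf hSne hlb, csInf_le hbdd hqS, fun u => ?_⟩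
  by_cases hΨu : Ψ u = ∞
  · rw [hΨu]; exact le_top
  rcases lt_trichotomy u t₀ with hu | rfl | hu
  · have hslope : ((Ψ t₀).toReal - (Ψ u).toReal) / (t₀ - u) ≤ s := by
      refine le_csInf hSne ?_
      rintro x ⟨t, ht, rfl⟩
      have h3 := hΨ.three_point hu ht.1 hΨu (hfin t ht)
      exact (slope_ineqs hu ht.1 h3.2).1
    have htu : (0:ℝ) < t₀ - u := by linarith
    rw [div_le_iff₀ htu] at hslope
    calc ENNReal.ofReal ((Ψ t₀).toReal + s * (u - t₀)) ≤ ENNReal.ofReal ((Ψ u).toReal) :=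
          ENNReal.ofReal_le_ofReal (by nlinarith)
      _ = Ψ u := ENNReal.ofReal_toReal hΨu
  · simp only [sub_self, mul_zero, add_zero]
    rw [ENNReal.ofReal_toReal hΨt]
  · have hslope : s ≤ sl u := by
      rcases le_or_gt u q with huq | huq
      · exact csInf_le hbdd ⟨u, ⟨hu, huq⟩, rfl⟩
      · refine (csInf_le hbdd hqS).trans ?_
        have h3 := hΨ.three_point hq huq hΨt hΨu
        exact (slope_ineqs hq huq h3.2).2.1
    have htu : (0:ℝ) < u - t₀ := by linarith
    rw [hsl, le_div_iff₀ htu] at hslope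
    calc ENNReal.ofReal ((Ψ t₀).toReal + s * (u - t₀)) ≤ ENNReal.ofReal ((Ψ u).toReal) :=
          ENNReal.ofReal_le_ofReal (by nlinarith)
      _ = Ψ u := ENNReal.ofReal_toReal hΨu

lemma IsEntropy.jensen_aux (hΨ : IsEntropy Ψ) {Z : Type*} [MeasurableSpace Z]
    (μ : Measure Z) [IsProbabilityMeasure μ] (f : Z → ℝ) (hfi : Integrable f μ)
    (t₀ s : ℝ) (hΨt₀ : Ψ t₀ ≠ ∞)
    (hsm : 0 ≤ s * ((∫ z, f z ∂μ) - t₀))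
    (hsupp : ∀ u : ℝ, ENNReal.ofReal ((Ψ t₀).toReal + s * (u - t₀)) ≤ Ψ u) :
    Ψ t₀ ≤ ∫⁻ z, Ψ (f z) ∂μ := by
  set A : ℝ := (Ψ t₀).toReal with hA
  set g : Z → ℝ := fun z => A + s * (f z - t₀) with hg
  have hgint : Integrable g μ :=
    (integrable_const A).add (((hfi.sub (integrable_const t₀)).const_mul s))
  have hgpint : Integrable (fun z => max (g z) 0) μ := hgint.pos_part
  have h1 : Integrable (fun z => s * (f z - t₀)) μ :=
    (hfi.sub (integrable_const t₀)).const_mul s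
  have h3 : ∫ z, (f z - t₀) ∂μ = (∫ z, f z ∂μ) - t₀ := by
    rw [integral_sub hfi (integrable_const t₀), integral_const]
    simp [measure_univ]
  have hintg : ∫ z, g z ∂μ = A + s * ((∫ z, f z ∂μ) - t₀) := by
    rw [hg, integral_add (integrable_const A) h1, integral_const, integral_const_mul, h3]
    simp [measure_univ]
  calc Ψ t₀ = ENNReal.ofReal A := (ENNReal.ofReal_toReal hΨt₀).symm
    _ ≤ ENNReal.ofReal (∫ z, g z ∂μ) := by
        rw [hintg]; exact ENNReal.ofReal_le_ofReal (by linarith)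
    _ ≤ ENNReal.ofReal (∫ z, max (g z) 0 ∂μ) :=
        ENNReal.ofReal_le_ofReal (integral_mono hgint hgpint fun z => le_max_left _ _)
    _ = ∫⁻ z, ENNReal.ofReal (max (g z) 0) ∂μ :=
        ofReal_integral_eq_lintegral_ofReal hgpint
          (Filter.Eventually.of_forall fun z => le_max_right _ _)
    _ ≤ ∫⁻ z, Ψ (f z) ∂μ := by
        refine lintegral_mono fun z => ?_
        rcases le_total (g z) 0 with h | h
        · rw [max_eq_right h, ENNReal.ofReal_zero]; exact zero_le
        · rw [max_eq_left h]; exact hsupp (f z)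

lemma IsEntropy.jensen (hΨ : IsEntropy Ψ) {Z : Type*} [MeasurableSpace Z]
    (μ : Measure Z) [IsProbabilityMeasure μ] (f : Z → ℝ) (hf : Measurable f)
    (hf0 : ∀ z, 0 ≤ f z) (hfi : Integrable f μ) :
    Ψ (∫ z, f z ∂μ) ≤ ∫⁻ z, Ψ (f z) ∂μ := by
  set m : ℝ := ∫ z, f z ∂μ with hmdef
  by_cases hD : ∫⁻ z, Ψ (f z) ∂μ = ∞
  · rw [hD]; exact le_top
  rcases lt_trichotomy m 1 with hm | hm | hm
  · -- case m < 1
    refine ENNReal.le_of_forall_nnreal_lt fun c hc => ?_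
    obtain ⟨ε, hε, hball⟩ := Metric.eventually_nhds_iff.1 (hΨ.lsc m ↑c hc)
    set δ : ℝ := min (ε / 2) ((1 - m) / 2) with hδdef
    have hδ0 : 0 < δ := lt_min (by linarith) (by linarith)
    have hδε : δ < ε := (min_le_left _ _).trans_lt (by linarith)
    have hδm : δ < 1 - m := (min_le_right _ _).trans_lt (by linarith)
    set t₀ : ℝ := m + δ with ht₀def
    have ht₀m : m < t₀ := by simp [ht₀def]; linarith
    have ht₀1 : t₀ < 1 := by simp [ht₀def]; linarith
    have hct₀ : ↑c < Ψ t₀ := hball (by rw [Real.dist_eq]; simp [ht₀def]; rw [abs_of_nonneg hδ0.le]; exact hδε)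
    set t₂ : ℝ := (m + t₀) / 2 with ht₂def
    have hmt₂ : m < t₂ := by simp [ht₂def]; linarith
    have ht₂t₀ : t₂ < t₀ := by simp [ht₂def]; linarith
    have ht₂1 : t₂ < 1 := by linarith
    have hΨt₂ : Ψ t₂ ≠ ∞ := by
      intro htop
      have hall : ∀ u : ℝ, u ≤ t₂ → Ψ u = ∞ := fun u hu =>
        top_le_iff.1 (htop ▸ hΨ.mono_left hu ht₂1.le)
      set S : Set Z := {z | f z ≤ t₂} with hSdef
      have hSm : MeasurableSet S := measurableSet_le hf measurable_const
      by_cases hS0 : μ S = 0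
      · have hae : ∀ᵐ z ∂μ, t₂ ≤ f z := by
          rw [ae_iff]
          refine measure_mono_null ?_ hS0
          intro z hz
          simp only [Set.mem_setOf_eq, not_le] at hz ⊢
          exact hz.le
        have : t₂ ≤ m := by
          have := integral_mono_ae (integrable_const t₂) hfi hae
          simpa [measure_univ] using this
        linarith
      · refine hD (top_le_iff.1 ?_)
        calc (⊤:ℝ≥0∞) = ⊤ * μ S := (ENNReal.top_mul hS0).symm
          _ = ∫⁻ z, S.indicator (fun _ => (⊤:ℝ≥0∞)) z ∂μ := by
              rw [lintegral_indicator hSm]; simp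
          _ ≤ ∫⁻ z, Ψ (f z) ∂μ := by
              refine lintegral_mono fun z => ?_
              by_cases hz : z ∈ S
              · rw [Set.indicator_of_mem hz, hall (f z) hz]
              · rw [Set.indicator_of_notMem hz]; exact zero_le
    have hΨ1 : Ψ 1 ≠ ∞ := by rw [hΨ.one_eq_zero]; exact ENNReal.zero_ne_top
    have hΨt₀ : Ψ t₀ ≠ ∞ := (hΨ.three_point ht₂t₀ ht₀1 hΨt₂ hΨ1).1
    obtain ⟨s, _, hs2, hsupp⟩ := hΨ.support_line ht₂t₀ ht₀1 hΨt₂ hΨt₀ hΨ1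
    have hs0 : s ≤ 0 := by
      refine hs2.trans ?_
      rw [hΨ.one_eq_zero]
      simp only [ENNReal.toReal_zero, zero_sub]
      exact div_nonpos_of_nonpos_of_nonneg (by simp [ENNReal.toReal_nonneg]) (by linarith)
    have hsm : 0 ≤ s * (m - t₀) := by nlinarith
    exact le_of_lt (hct₀.trans_le (hΨ.jensen_aux μ f hfi t₀ s hΨt₀ hsm hsupp))
  · rw [hm, hΨ.one_eq_zero]; exact zero_le
  · -- case 1 < m
    refine ENNReal.le_of_forall_nnreal_lt fun c hc => ?_
    obtain ⟨ε, hε, hball⟩ := Metric.eventually_nhds_iff.1 (hΨ.lsc m ↑c hc)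
    set δ : ℝ := min (ε / 2) ((m - 1) / 2) with hδdef
    have hδ0 : 0 < δ := lt_min (by linarith) (by linarith)
    have hδε : δ < ε := (min_le_left _ _).trans_lt (by linarith)
    have hδm : δ < m - 1 := (min_le_right _ _).trans_lt (by linarith)
    set t₀ : ℝ := m - δ with ht₀def
    have ht₀m : t₀ < m := by simp [ht₀def]; linarith
    have ht₀1 : 1 < t₀ := by simp [ht₀def]; linarith
    have hct₀ : ↑c < Ψ t₀ := hball (by rw [Real.dist_eq]; simp [ht₀def]; rw [abs_of_nonneg hδ0.le]; exact hδε)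
    set t₂ : ℝ := (t₀ + m) / 2 with ht₂def
    have ht₀t₂ : t₀ < t₂ := by simp [ht₂def]; linarith
    have ht₂m : t₂ < m := by simp [ht₂def]; linarith
    have h1t₂ : 1 < t₂ := by linarith
    have hΨt₂ : Ψ t₂ ≠ ∞ := by
      intro htop
      have hall : ∀ u : ℝ, t₂ ≤ u → Ψ u = ∞ := fun u hu =>
        top_le_iff.1 (htop ▸ hΨ.mono_right h1t₂.le hu)
      set S : Set Z := {z | t₂ ≤ f z} with hSdef
      have hSm : MeasurableSet S := measurableSet_le measurable_const hf
      by_cases hS0 : μ S = 0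
      · have hae : ∀ᵐ z ∂μ, f z ≤ t₂ := by
          rw [ae_iff]
          refine measure_mono_null ?_ hS0
          intro z hz
          simp only [Set.mem_setOf_eq, not_le] at hz ⊢
          exact hz.le
        have : m ≤ t₂ := by
          have := integral_mono_ae hfi (integrable_const t₂) hae
          simpa [measure_univ] using this
        linarith
      · refine hD (top_le_iff.1 ?_)
        calc (⊤:ℝ≥0∞) = ⊤ * μ S := (ENNReal.top_mul hS0).symm
          _ = ∫⁻ z, S.indicator (fun _ => (⊤:ℝ≥0∞)) z ∂μ := by
              rw [lintegral_indicator hSm]; simp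
          _ ≤ ∫⁻ z, Ψ (f z) ∂μ := by
              refine lintegral_mono fun z => ?_
              by_cases hz : z ∈ S
              · rw [Set.indicator_of_mem hz, hall (f z) hz]
              · rw [Set.indicator_of_notMem hz]; exact zero_le
    have hΨ1 : Ψ 1 ≠ ∞ := by rw [hΨ.one_eq_zero]; exact ENNReal.zero_ne_top
    have hΨt₀ : Ψ t₀ ≠ ∞ := by
      intro htop
      have := hΨ.mono_right ht₀1.le ht₀t₂.le
      rw [htop] at this
      exact hΨt₂ (top_le_iff.1 this)
    obtain ⟨s, hs1, _, hsupp⟩ := hΨ.support_line ht₀1 ht₀t₂ hΨ1 hΨt₀ hΨt₂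
    have hs0 : 0 ≤ s := by
      refine le_trans ?_ hs1
      rw [hΨ.one_eq_zero]
      simp only [ENNReal.toReal_zero, sub_zero]
      exact div_nonneg ENNReal.toReal_nonneg (by linarith)
    have hsm : 0 ≤ s * (m - t₀) := mul_nonneg hs0 (by linarith)
    exact le_of_lt (hct₀.trans_le (hΨ.jensen_aux μ f hfi t₀ s hΨt₀ hsm hsupp))

lemma csiszar_self {Z : Type*} [MeasurableSpace Z] {Ψ : ℝ → ℝ≥0∞} (hΨ1 : Ψ 1 = 0)
    (μ : Measure Z) [SigmaFinite μ] : csiszar Ψ μ μ = 0 := by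
  rw [csiszar, if_pos (Measure.AbsolutelyContinuous.refl μ)]
  calc ∫⁻ z, Ψ ((μ.rnDeriv μ z).toReal) ∂μ = ∫⁻ _, 0 ∂μ := by
        refine lintegral_congr_ae ((Measure.rnDeriv_self μ).mono fun z hz => ?_)
        simp only [hz]; simp [hΨ1]
    _ = 0 := lintegral_zero

/-- For every `α ≥ 1` and every minimizer `π^α` of `C_ub^α(μ,ν)`, one
has `Ψ₁(π^α(X×Y)) ≤ C(μ,ν)`; consequently the minimizers with `α ≥ 1` have uniformly
bounded total mass. -/
theorem uot_minimizers_uniformly_bounded_mass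
    {d : ℕ} (τ : ℝ) (hτ : 0 < τ)
    (X Y : Set (EuclideanSpace ℝ (Fin d))) (hX : IsCompact X) (hY : IsCompact Y)
    (μ ν : Measure (EuclideanSpace ℝ (Fin d)))
    [IsProbabilityMeasure μ] [IsProbabilityMeasure ν]
    (hμX : μ Xᶜ = 0) (hνY : ν Yᶜ = 0)
    (Ψ₁ Ψ₂ : ℝ → ℝ≥0∞) (hΨ₁ : IsEntropy Ψ₁) (hΨ₂ : IsEntropy Ψ₂) :
    (∀ α : ℝ, 1 ≤ α → ∀ π : Measure (EuclideanSpace ℝ (Fin d) × EuclideanSpace ℝ (Fin d)),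
      IsFiniteMeasure π → π ((X ×ˢ Y)ᶜ) = 0 →
      uotObj τ α Ψ₁ Ψ₂ μ ν π = UOTcost τ α Ψ₁ Ψ₂ X Y μ ν →
      Ψ₁ ((π Set.univ).toReal) ≤ OTcost τ μ ν) ∧
    ∃ B : ℝ≥0∞, B < ∞ ∧ ∀ α : ℝ, 1 ≤ α → ∀ π : Measure (EuclideanSpace ℝ (Fin d) × EuclideanSpace ℝ (Fin d)),
      IsFiniteMeasure π → π ((X ×ˢ Y)ᶜ) = 0 →
      uotObj τ α Ψ₁ Ψ₂ μ ν π = UOTcost τ α Ψ₁ Ψ₂ X Y μ ν →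
      π Set.univ ≤ B := by
  have hXm : MeasurableSet (Xᶜ) := hX.isClosed.measurableSet.compl
  have hYm : MeasurableSet (Yᶜ) := hY.isClosed.measurableSet.compl
  have hnull_of_marg : ∀ γ : Measure (EuclideanSpace ℝ (Fin d) × EuclideanSpace ℝ (Fin d)),
      γ.map Prod.fst = μ → γ.map Prod.snd = ν → γ ((X ×ˢ Y)ᶜ) = 0 := by
    intro γ h1 h2
    have hγ1 : γ (Prod.fst ⁻¹' Xᶜ) = 0 := by
      rw [← Measure.map_apply measurable_fst hXm, h1]; exact hμX
    have hγ2 : γ (Prod.snd ⁻¹' Yᶜ) = 0 := by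
      rw [← Measure.map_apply measurable_snd hYm, h2]; exact hνY
    refine measure_mono_null ?_ (measure_union_null hγ1 hγ2)
    intro z hz
    simp only [Set.mem_compl_iff, Set.mem_prod, not_and_or] at hz
    rcases hz with h | h
    · exact Or.inl h
    · exact Or.inr h
  have key : ∀ α : ℝ, 1 ≤ α → ∀ π : Measure (EuclideanSpace ℝ (Fin d) × EuclideanSpace ℝ (Fin d)),
      IsFiniteMeasure π → π ((X ×ˢ Y)ᶜ) = 0 →
      uotObj τ α Ψ₁ Ψ₂ μ ν π = UOTcost τ α Ψ₁ Ψ₂ X Y μ ν →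
      Ψ₁ ((π Set.univ).toReal) ≤ OTcost τ μ ν := by
    intro α hα π hfin hnull hopt
    haveI := hfin
    have hUO : UOTcost τ α Ψ₁ Ψ₂ X Y μ ν ≤ OTcost τ μ ν := by
      rw [OTcost]
      refine le_iInf fun γ => le_iInf fun hγ => ?_
      have hγu : γ Set.univ = 1 := by
        have h := Measure.map_apply (μ := γ) measurable_fst MeasurableSet.univ
        rw [hγ.1] at h
        simpa using h.symm
      haveI : IsFiniteMeasure γ := ⟨by rw [hγu]; exact ENNReal.one_lt_top⟩
      have hγnull := hnull_of_marg γ hγ.1 hγ.2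
      have hle : UOTcost τ α Ψ₁ Ψ₂ X Y μ ν ≤ uotObj τ α Ψ₁ Ψ₂ μ ν γ := by
        rw [UOTcost]
        exact iInf_le_of_le γ (iInf_le_of_le ‹IsFiniteMeasure γ› (iInf_le_of_le hγnull le_rfl))
      refine hle.trans_eq ?_
      rw [uotObj, hγ.1, hγ.2, csiszar_self hΨ₁.one_eq_zero μ, csiszar_self hΨ₂.one_eq_zero ν]
      simp
    have hC : Ψ₁ ((π Set.univ).toReal) ≤ csiszar Ψ₁ (π.map Prod.fst) μ := by
      rw [csiszar]
      split_ifs with hac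
      · haveI : IsFiniteMeasure (π.map Prod.fst) :=
          ⟨by rw [Measure.map_apply measurable_fst MeasurableSet.univ]
              simpa using measure_lt_top π _⟩
        have hint : Integrable (fun z => ((π.map Prod.fst).rnDeriv μ z).toReal) μ :=
          Measure.integrable_toReal_rnDeriv
        have hmeas : Measurable fun z => ((π.map Prod.fst).rnDeriv μ z).toReal :=
          (Measure.measurable_rnDeriv _ _).ennreal_toReal
        have hmain := hΨ₁.jensen μ _ hmeas (fun z => ENNReal.toReal_nonneg) hint
        rw [Measure.integral_toReal_rnDeriv hac] at hmain
        have huniv : (π.map Prod.fst) Set.univ = π Set.univ := by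
          rw [Measure.map_apply measurable_fst MeasurableSet.univ, Set.preimage_univ]
        rwa [measureReal_def, huniv] at hmain
      · exact le_top
    have hobj : csiszar Ψ₁ (π.map Prod.fst) μ ≤ uotObj τ α Ψ₁ Ψ₂ μ ν π := by
      rw [uotObj]
      calc csiszar Ψ₁ (π.map Prod.fst) μ
          = 1 * csiszar Ψ₁ (π.map Prod.fst) μ := (one_mul _).symm
        _ ≤ ENNReal.ofReal α * csiszar Ψ₁ (π.map Prod.fst) μ :=
            mul_le_mul_left (ENNReal.one_le_ofReal.2 hα) _
        _ ≤ _ := le_add_self.trans le_self_add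
    exact ((hC.trans hobj).trans_eq hopt).trans hUO
  refine ⟨key, ?_⟩
  obtain ⟨RX, hRX⟩ := isBounded_iff_forall_norm_le.1 hX.isBounded
  obtain ⟨RY, hRY⟩ := isBounded_iff_forall_norm_le.1 hY.isBounded
  set K : ℝ≥0∞ := ENNReal.ofReal (τ * (RX + RY) ^ 2) with hKdef
  have hOT : OTcost τ μ ν ≤ K := by
    set γ : Measure (EuclideanSpace ℝ (Fin d) × EuclideanSpace ℝ (Fin d)) := μ.prod ν with hγdef
    have hmf : γ.map Prod.fst = μ := by rw [hγdef, Measure.map_fst_prod]; simp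
    have hms : γ.map Prod.snd = ν := by rw [hγdef, Measure.map_snd_prod]; simp
    have hγnull := hnull_of_marg γ hmf hms
    have hae : ∀ᵐ z ∂γ, z ∈ X ×ˢ Y := by
      rw [ae_iff]
      exact hγnull
    have hbound : ∫⁻ z, ENNReal.ofReal (cost τ z.1 z.2) ∂γ ≤ K := by
      calc ∫⁻ z, ENNReal.ofReal (cost τ z.1 z.2) ∂γ ≤ ∫⁻ _, K ∂γ := by
            refine lintegral_mono_ae (hae.mono fun z hz => ?_)
            refine ENNReal.ofReal_le_ofReal ?_
            have h1 : ‖z.1‖ ≤ RX := hRX z.1 hz.1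
            have h2 : ‖z.2‖ ≤ RY := hRY z.2 hz.2
            have hn : ‖z.1 - z.2‖ ≤ RX + RY := (norm_sub_le _ _).trans (by linarith)
            have hsq : ‖z.1 - z.2‖ ^ 2 ≤ (RX + RY) ^ 2 := by
              nlinarith [norm_nonneg (z.1 - z.2)]
            rw [cost]
            nlinarith [hτ.le]
        _ = K := by
            haveI : IsProbabilityMeasure γ := by rw [hγdef]; infer_instance
            rw [lintegral_const]; simp
    rw [OTcost]
    exact iInf_le_of_le γ (iInf_le_of_le ⟨hmf, hms⟩ hbound)
  have hev : ∀ᶠ t : ℝ in atTop, K < Ψ₁ t / ENNReal.ofReal t :=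
    hΨ₁.superlinear.eventually (eventually_gt_nhds ENNReal.ofReal_lt_top)
  obtain ⟨T, hT⟩ := eventually_atTop.1 hev
  refine ⟨ENNReal.ofReal (max T 1), ENNReal.ofReal_lt_top, ?_⟩
  intro α hα π hfin hnull hopt
  haveI := hfin
  have hkey : Ψ₁ ((π Set.univ).toReal) ≤ K := (key α hα π hfin hnull hopt).trans hOT
  by_contra hgt
  rw [not_le] at hgt
  set mass : ℝ := (π Set.univ).toReal with hmass
  have hπu : π Set.univ = ENNReal.ofReal mass := (ENNReal.ofReal_toReal (measure_ne_top π _)).symm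
  rw [hπu, ENNReal.ofReal_lt_ofReal_iff_of_nonneg (le_max_of_le_right zero_le_one)] at hgt
  have hTm : T ≤ mass := (le_max_left _ _).trans hgt.le
  have h1m : (1:ℝ) ≤ mass := (le_max_right _ _).trans hgt.le
  have hlt := hT mass hTm
  have hcontra : Ψ₁ mass / ENNReal.ofReal mass ≤ K := by
    calc Ψ₁ mass / ENNReal.ofReal mass ≤ K / ENNReal.ofReal mass :=
          ENNReal.div_le_div_right hkey _
      _ = K * (ENNReal.ofReal mass)⁻¹ := by rw [ENNReal.div_eq_inv_mul, mul_comm]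
      _ ≤ K * 1 := mul_le_mul_right (ENNReal.inv_le_one.2 (ENNReal.one_le_ofReal.2 h1m)) _
      _ = K := mul_one _
  exact absurd (hlt.trans_le hcontra) (lt_irrefl _)

end
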